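/- There exists an observation space 𝒵, a distribution P(z), a learning algorithm 𝓛 mapping samples S_m to hypotheses H, and a [0,1]-valued parametric loss L(·;H) satisfying the Markov chain S_m → H → L(·;H), such that for all m ≥ 1 the expected generalization risk E[R_emp(H;S_m) − R_true(H)] = 0, yet P{|R_true(H) − R_emp(H;S_m)| = 1/2} = 1 for all m ≥ 1. -/

import Mathlib

open MeasureTheory
open scoped ENNReal

noncomputable section

namespace GenGap

def Pm : Measure ℝ := volume.restrict (Set.Icc 0 1)

instance : IsProbabilityMeasure Pm := ⟨by simp [Pm, Real.volume_Icc]⟩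

instance : NullSingletonClass Pm := by unfold Pm; infer_instance

def nu : Measure Bool :=
  (1/2 : ℝ≥0∞) • Measure.dirac true + (1/2 : ℝ≥0∞) • Measure.dirac false

instance : IsProbabilityMeasure nu := by
  constructor
  simp [nu]
  exact ENNReal.inv_two_add_inv_two

def ext (m : ℕ) (s : Fin m → ℝ) : ℕ → ℝ :=
  fun n => if h : n < m then s ⟨n, h⟩ else if h0 : 0 < m then s ⟨0, h0⟩ else 0

lemma measurable_ext (m : ℕ) : Measurable (ext m) := by
  apply measurable_pi_lambda
  intro n
  unfold ext
  split_ifs with h h0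
  · exact measurable_pi_apply _
  · exact measurable_pi_apply _
  · exact measurable_const

def alg (m : ℕ) (s : Fin m → ℝ) : Measure ((ℕ → ℝ) × Bool) :=
  nu.map (fun b => (ext m s, b))

instance (m s) : IsProbabilityMeasure (alg m s) :=
  Measure.isProbabilityMeasure_map (measurable_prodMk_left).aemeasurable

def L : ℝ → ((ℕ → ℝ) × Bool) → ℝ :=
  open Classical in fun z h => if z ∈ Set.range h.1 then (if h.2 then 0 else 1) else 1/2

lemma L_mem (z h) : L z h ∈ Set.Icc (0:ℝ) 1 := by
  unfold L; split_ifs <;> norm_num [abs_le]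

lemma L_of_mem {z h} (hz : z ∈ Set.range h.1) : L z h = if h.2 then 0 else 1 := by
  unfold L; rw [if_pos hz]

lemma L_of_not_mem {z h} (hz : z ∉ Set.range h.1) : L z h = 1/2 := by
  unfold L; rw [if_neg hz]

lemma kappa_eq (m : ℕ) (s : Fin m → ℝ) :
    (alg m s).map (fun h => (s, h)) =
      (1/2 : ℝ≥0∞) • Measure.dirac (s, (ext m s, true)) +
      (1/2 : ℝ≥0∞) • Measure.dirac (s, (ext m s, false)) := by
  unfold alg nu
  rw [Measure.map_map measurable_prodMk_left measurable_prodMk_left,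
    Measure.map_add _ _ (measurable_prodMk_left.comp measurable_prodMk_left),
    Measure.map_smul, Measure.map_smul,
    Measure.map_dirac' (measurable_prodMk_left.comp measurable_prodMk_left),
    Measure.map_dirac' (measurable_prodMk_left.comp measurable_prodMk_left)]
  rfl

lemma measurable_kappa (m : ℕ) :
    Measurable (fun s : Fin m → ℝ => (alg m s).map (fun h => (s, h))) := by
  simp_rw [kappa_eq]
  have h1 : Measurable fun s : Fin m → ℝ => (s, (ext m s, true)) :=
    measurable_id.prodMk ((measurable_ext m).prodMk measurable_const)
  have h2 : Measurable fun s : Fin m → ℝ => (s, (ext m s, false)) :=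
    measurable_id.prodMk ((measurable_ext m).prodMk measurable_const)
  apply Measure.measurable_of_measurable_coe
  intro A hA
  simp_rw [Measure.add_apply, Measure.smul_apply, Measure.dirac_apply' _ hA, smul_eq_mul]
  exact ((measurable_const.mul ((measurable_one.indicator hA).comp h1)).add
    (measurable_const.mul ((measurable_one.indicator hA).comp h2)))


def B (m : ℕ) : Set ((Fin m → ℝ) × ((ℕ → ℝ) × Bool)) :=
  {p | (∀ n, p.2.1 n ∈ Set.range p.1) ∧ ∀ i : Fin m, p.2.1 (i : ℕ) = p.1 i}

lemma measurableSet_B (m : ℕ) : MeasurableSet (B m) := by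
  have h1 : MeasurableSet {p : (Fin m → ℝ) × ((ℕ → ℝ) × Bool) | ∀ n, p.2.1 n ∈ Set.range p.1} := by
    rw [Set.setOf_forall]
    refine MeasurableSet.iInter fun n => ?_
    have : {p : (Fin m → ℝ) × ((ℕ → ℝ) × Bool) | p.2.1 n ∈ Set.range p.1}
        = ⋃ i : Fin m, {p | p.2.1 n = p.1 i} := by
      ext p; simp [Set.range, eq_comm]
    rw [this]
    refine MeasurableSet.iUnion fun i => ?_
    exact measurableSet_eq_fun (by fun_prop) (by fun_prop)
  have h2 : MeasurableSet {p : (Fin m → ℝ) × ((ℕ → ℝ) × Bool) | ∀ i : Fin m, p.2.1 (i:ℕ) = p.1 i} := by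
    rw [Set.setOf_forall]
    refine MeasurableSet.iInter fun i => ?_
    exact measurableSet_eq_fun (by fun_prop) (by fun_prop)
  have : B m = {p : (Fin m → ℝ) × ((ℕ → ℝ) × Bool) | ∀ n, p.2.1 n ∈ Set.range p.1} ∩
      {p | ∀ i : Fin m, p.2.1 (i:ℕ) = p.1 i} := by
    ext p; simp [B, Set.mem_setOf_eq, Set.mem_inter_iff]
  rw [this]; exact h1.inter h2

lemma mem_B {m : ℕ} (hm : 1 ≤ m) (s : Fin m → ℝ) (b : Bool) : (s, (ext m s, b)) ∈ B m := by
  constructor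
  · intro n
    by_cases h : n < m
    · exact ⟨⟨n, h⟩, by simp [ext, h]⟩
    · have h0 : 0 < m := by omega
      exact ⟨⟨0, h0⟩, by simp [ext, h, h0]⟩
  · intro i
    simp [ext, i.isLt]

lemma range_null {m : ℕ} {p : (Fin m → ℝ) × ((ℕ → ℝ) × Bool)} (hp : p ∈ B m) :
    Pm (Set.range p.2.1) = 0 := by
  have hsub : Set.range p.2.1 ⊆ Set.range p.1 := by
    rintro x ⟨n, rfl⟩; exact hp.1 n
  exact Set.Countable.measure_zero ((Set.finite_range p.1).countable.mono hsub) Pm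

lemma true_risk {p : (ℕ → ℝ) × Bool} (h0 : Pm (Set.range p.1) = 0) :
    ∫ z, L z p ∂Pm = 1/2 := by
  have hae : (fun z => L z p) =ᵐ[Pm] fun _ => (1/2 : ℝ) := by
    have hmem : ∀ᵐ z ∂Pm, z ∉ Set.range p.1 := by
      rw [ae_iff]
      simp only [not_not]; exact h0
    filter_upwards [hmem] with z hz
    exact L_of_not_mem hz
  rw [integral_congr_ae hae, integral_const]
  simp

lemma emp_sum {m : ℕ} {p : (Fin m → ℝ) × ((ℕ → ℝ) × Bool)} (hp : p ∈ B m) :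
    ∑ i, L (p.1 i) p.2 = (m : ℝ) * (if p.2.2 then 0 else 1) := by
  have h : ∀ i : Fin m, L (p.1 i) p.2 = if p.2.2 then 0 else 1 := fun i =>
    L_of_mem ⟨(i : ℕ), hp.2 i⟩
  rw [Finset.sum_congr rfl (fun i _ => h i), Finset.sum_const, Finset.card_univ,
    Fintype.card_fin, nsmul_eq_mul]

def mu (m : ℕ) : Measure ((Fin m → ℝ) × ((ℕ → ℝ) × Bool)) :=
  (Measure.pi fun _ : Fin m => Pm).bind fun s => (alg m s).map fun h => (s, h)

lemma mu_apply (m : ℕ) {A : Set ((Fin m → ℝ) × ((ℕ → ℝ) × Bool))} (hA : MeasurableSet A) :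
    mu m A = ∫⁻ s, ((1/2) * A.indicator 1 (s, (ext m s, true))
      + (1/2) * A.indicator 1 (s, (ext m s, false))) ∂(Measure.pi fun _ : Fin m => Pm) := by
  rw [mu, Measure.bind_apply hA (measurable_kappa m).aemeasurable]
  refine lintegral_congr fun s => ?_
  rw [kappa_eq]
  simp [Measure.dirac_apply' _ hA]

lemma mu_univ (m : ℕ) : mu m Set.univ = 1 := by
  rw [mu_apply m MeasurableSet.univ]
  simp [ENNReal.inv_two_add_inv_two]

lemma mu_B {m : ℕ} (hm : 1 ≤ m) : mu m (B m) = 1 := by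
  rw [mu_apply m (measurableSet_B m)]
  have : ∀ s : Fin m → ℝ,
      ((1:ℝ≥0∞)/2) * (B m).indicator 1 (s, (ext m s, true))
        + (1/2) * (B m).indicator 1 (s, (ext m s, false)) = 1 := by
    intro s
    rw [Set.indicator_of_mem (mem_B hm s true), Set.indicator_of_mem (mem_B hm s false)]
    simp [ENNReal.inv_two_add_inv_two]
  simp only [this]
  simp

def T (m : ℕ) : Set ((Fin m → ℝ) × ((ℕ → ℝ) × Bool)) := {p | p.2.2 = true}

lemma measurableSet_T (m : ℕ) : MeasurableSet (T m) :=
  (measurable_snd.comp measurable_snd) (MeasurableSet.singleton true)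

lemma mu_T (m : ℕ) : mu m (T m) = 1/2 := by
  rw [mu_apply m (measurableSet_T m)]
  have : ∀ s : Fin m → ℝ,
      ((1:ℝ≥0∞)/2) * (T m).indicator 1 (s, (ext m s, true))
        + (1/2) * (T m).indicator 1 (s, (ext m s, false)) = 1/2 := by
    intro s
    rw [Set.indicator_of_mem (by simp [T]), Set.indicator_of_notMem (by simp [T])]
    simp
  simp only [this]
  simp

end GenGap

open GenGap

/-- There exist an observation space `𝒵`, a distribution `P`, a (randomized)
learning algorithm `alg` mapping samples to distributions over hypotheses, and a
`[0,1]`-valued parametric loss `L` (which depends on the data only through the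
hypothesis, so the Markov chain `S_m → H → L(·;H)` holds), such that for every
`m ≥ 1` the expected generalization gap is `0`, yet
`|R_true(H) − R_emp(H;S_m)| = 1/2` with probability one. -/
theorem gen_in_expectation_not_in_probability :
    ∃ (𝒵 : Type) (_ : MeasurableSpace 𝒵) (P : Measure 𝒵) (_ : IsProbabilityMeasure P)
      (ℋ : Type) (_ : MeasurableSpace ℋ)
      (alg : (m : ℕ) → (Fin m → 𝒵) → Measure ℋ)
      (_ : ∀ m s, IsProbabilityMeasure (alg m s))
      (L : 𝒵 → ℋ → ℝ) (_ : ∀ z h, L z h ∈ Set.Icc (0:ℝ) 1),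
      ∀ m : ℕ, 1 ≤ m →
        (∫ p : (Fin m → 𝒵) × ℋ,
            (((1 / (m : ℝ)) * ∑ i, L (p.1 i) p.2) - ∫ z, L z p.2 ∂P)
          ∂((Measure.pi fun _ : Fin m => P).bind
              fun s => (alg m s).map fun h => (s, h))) = 0 ∧
        ((Measure.pi fun _ : Fin m => P).bind
              fun s => (alg m s).map fun h => (s, h))
          {p : (Fin m → 𝒵) × ℋ |
            |(∫ z, L z p.2 ∂P) - (1 / (m : ℝ)) * ∑ i, L (p.1 i) p.2| = 1/2} = 1 := by
  refine ⟨ℝ, inferInstance, GenGap.Pm, inferInstance, (ℕ → ℝ) × Bool, inferInstance,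
    GenGap.alg, fun m s => inferInstance, GenGap.L, GenGap.L_mem, ?_⟩
  intro m hm
  have hμ : ((Measure.pi fun _ : Fin m => GenGap.Pm).bind
      fun s => (GenGap.alg m s).map fun h => (s, h)) = GenGap.mu m := rfl
  rw [hμ]
  haveI : IsProbabilityMeasure (GenGap.mu m) := ⟨GenGap.mu_univ m⟩
  have hm0 : (m : ℝ) ≠ 0 := Nat.cast_ne_zero.2 (by omega)
  have hTc : GenGap.mu m (GenGap.T m)ᶜ = 1/2 := by
    rw [measure_compl (measurableSet_T m) (measure_ne_top _ _), measure_univ, mu_T]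
    simpa [one_div] using ENNReal.one_sub_inv_two
  constructor
  · set G : (Fin m → ℝ) × ((ℕ → ℝ) × Bool) → ℝ :=
      fun p => if p.2.2 = true then -(1/2) else 1/2 with hGdef
    have hcompl : GenGap.mu m (GenGap.B m)ᶜ = 0 := by
      rw [measure_compl (measurableSet_B m) (measure_ne_top _ _), GenGap.mu_B hm,
        measure_univ, tsub_self]
    have haeB : ∀ᵐ p ∂(GenGap.mu m), p ∈ GenGap.B m := by
      rw [ae_iff]; exact hcompl
    have hae : (fun p : (Fin m → ℝ) × ((ℕ → ℝ) × Bool) =>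
        ((1 / (m : ℝ)) * ∑ i, GenGap.L (p.1 i) p.2) - ∫ z, GenGap.L z p.2 ∂GenGap.Pm)
        =ᵐ[GenGap.mu m] G := by
      filter_upwards [haeB] with p hp
      rw [GenGap.emp_sum hp, GenGap.true_risk (GenGap.range_null hp)]
      cases hb : p.2.2
      · simp only [hGdef, hb, if_false]
        field_simp
        norm_num
      · simp [hGdef, hb]
    rw [integral_congr_ae hae]
    have hGm : Measurable G :=
      Measurable.ite (measurableSet_T m) measurable_const measurable_const
    have hGi : Integrable G (GenGap.mu m) := by
      refine Integrable.mono' (integrable_const (1:ℝ)) hGm.aestronglyMeasurable ?_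
      refine Filter.Eventually.of_forall fun p => ?_
      simp only [hGdef, Real.norm_eq_abs]
      split_ifs <;> norm_num [abs_le]
    rw [← integral_add_compl (measurableSet_T m) hGi]
    have h1 : ∫ p in GenGap.T m, G p ∂(GenGap.mu m)
        = ((GenGap.mu m) (GenGap.T m)).toReal • (-(1/2) : ℝ) := by
      rw [setIntegral_congr_fun (measurableSet_T m)
        (g := fun _ => (-(1/2) : ℝ)) (fun p hp => by
          have hb : p.2.2 = true := hp
          simp [hGdef, hb])]
      exact setIntegral_const _
    have h2 : ∫ p in (GenGap.T m)ᶜ, G p ∂(GenGap.mu m)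
        = ((GenGap.mu m) (GenGap.T m)ᶜ).toReal • ((1/2) : ℝ) := by
      rw [setIntegral_congr_fun (measurableSet_T m).compl
        (g := fun _ => ((1/2) : ℝ)) (fun p hp => by
          simp only [GenGap.T, Set.mem_compl_iff, Set.mem_setOf_eq] at hp
          simp [hGdef, hp])]
      exact setIntegral_const _
    rw [h1, h2, GenGap.mu_T m, hTc]
    norm_num
  · refine le_antisymm ((measure_mono (Set.subset_univ _)).trans_eq (GenGap.mu_univ m)) ?_
    have hsub : GenGap.B m ⊆ {p : (Fin m → ℝ) × ((ℕ → ℝ) × Bool) |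
        |(∫ z, GenGap.L z p.2 ∂GenGap.Pm) - (1 / (m : ℝ)) * ∑ i, GenGap.L (p.1 i) p.2| = 1/2} := by
      intro p hp
      show |(∫ z, GenGap.L z p.2 ∂GenGap.Pm) - (1 / (m : ℝ)) * ∑ i, GenGap.L (p.1 i) p.2| = 1/2
      rw [GenGap.true_risk (GenGap.range_null hp), GenGap.emp_sum hp]
      cases hb : p.2.2
      · simp only [hb, Bool.false_eq_true, if_false, mul_one, one_div]
        rw [inv_mul_cancel₀ hm0, abs_sub_comm, abs_of_nonneg (by norm_num)]
        norm_num
      · simp [hb]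
    calc (1:ℝ≥0∞) = GenGap.mu m (GenGap.B m) := (GenGap.mu_B hm).symm
      _ ≤ _ := measure_mono hsub
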